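/- Let (P,V) be a locally convex cone such that for each b ∈ P and v ∈ V there exists c ∈ v(b)v with a ≤ c for all a ∈ v(b)v (i.e., every symmetric neighborhood has a greatest element). Then (P,V) is barreled: for every barrel B ⊆ P² and every b ∈ P there exist v ∈ V and λ > 0 such that (a,b) ∈ λB for all a ∈ v(b)v. -/
import Mathlib


open scoped NNReal

/-- A preordered cone: a commutative monoid with scalar multiplication by
nonnegative reals, carrying a preorder compatible with addition and scalar
multiplication. -/
class PreorderedCone (P : Type*) extends AddCommMonoid P, Module ℝ≥0 P, Preorder P where
  add_le_add_right' : ∀ {x y : P} (z : P), x ≤ y → x + z ≤ y + z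
  smul_le_smul' : ∀ (r : ℝ≥0) {x y : P}, x ≤ y → r • x ≤ r • y

/-- An abstract 0-neighborhood system on a preordered cone, encoded by the
relation `rel v a b`, meaning `a ≤ b + v`.  Together with `P` it constitutes a
locally convex cone `(P, V)`. -/
structure NbhdSystem (P : Type*) [PreorderedCone P] where
  /-- The index type of neighborhoods (the elements of `V`). -/
  V : Type
  /-- `rel v a b` means `a ≤ b + v`. -/
  rel : V → P → P → Prop
  /-- `a ≤ b` implies `a ≤ b + v`, since `0 < v`. -/
  rel_of_le : ∀ (v : V) {a b : P}, a ≤ b → rel v a b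
  /-- monotonicity of the relation in both arguments. -/
  rel_mono : ∀ (v : V) {a a' b b' : P}, a' ≤ a → b ≤ b' → rel v a b → rel v a' b'
  /-- `V` is directed downward. -/
  directed : ∀ u v : V, ∃ w : V, ∀ a b : P, rel w a b → rel u a b ∧ rel v a b
  /-- compatibility with addition: `a ≤ b + v` implies `a + c ≤ b + c + v`. -/
  rel_add : ∀ (v : V) (c : P) {a b : P}, rel v a b → rel v (a + c) (b + c)
  /-- closure of `V` under addition: `a ≤ b + u` and `b ≤ c + v` give
  `a ≤ c + (u + v)` for some `u + v ∈ V`. -/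
  add_mem : ∀ u v : V, ∃ w : V, ∀ a b c : P, rel u a b → rel v b c → rel w a c
  /-- closure of `V` under multiplication by positive scalars. -/
  smul_mem : ∀ (v : V) (r : ℝ≥0), 0 < r → ∃ w : V,
    ∀ a b : P, rel w (r • a) (r • b) ↔ rel v a b

variable {P : Type*} [PreorderedCone P]

/-- The symmetric neighborhood `v(b)v` of `b`. -/
def symN (N : NbhdSystem P) (v : N.V) (b : P) : Set P :=
  {a | N.rel v a b ∧ N.rel v b a}

/-- Membership in the dual cone `P*`: a linear functional `P → ℝ ∪ {+∞}`
which is (uniformly) continuous. -/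
def InDual (N : NbhdSystem P) (μ : P → EReal) : Prop :=
  μ 0 = 0 ∧ (∀ x, μ x ≠ ⊥) ∧
  (∀ x y : P, μ (x + y) = μ x + μ y) ∧
  (∀ (r : ℝ≥0) (x : P), μ (r • x) = ((r : ℝ) : EReal) * μ x) ∧
  ∃ v : N.V, ∀ a b : P, N.rel v a b → μ a ≤ μ b + 1

/-- `λ B = {(λx, λy) : (x,y) ∈ B}`. -/
def scaleSet (l : ℝ≥0) (B : Set (P × P)) : Set (P × P) :=
  (fun p : P × P => (l • p.1, l • p.2)) '' B

/-- `B ⊆ P²` is a barrel: a convex set satisfying (B1) and (B2). -/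
def IsBarrel (N : NbhdSystem P) (B : Set (P × P)) : Prop :=
  (∀ p ∈ B, ∀ q ∈ B, ∀ t : ℝ≥0, t ≤ 1 →
     (t • p.1 + (1 - t) • q.1, t • p.2 + (1 - t) • q.2) ∈ B) ∧
  (∀ b : P, ∃ v : N.V, ∀ a ∈ symN N v b,
     ∃ l : ℝ≥0, 0 < l ∧ (a, b) ∈ scaleSet l B) ∧
  (∀ a b : P, (a, b) ∉ B → ∃ μ : P → EReal, InDual N μ ∧
     μ b + 1 < μ a ∧ ∀ p ∈ B, μ p.1 ≤ μ p.2 + 1)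

/-- Elements of the dual are monotone. -/
lemma InDual.monotone' (N : NbhdSystem P) {μ : P → EReal} (h : InDual N μ)
    {a b : P} (hab : a ≤ b) : μ a ≤ μ b := by
  obtain ⟨h0, hbot, hadd, hsmul, v, hv⟩ := h
  have key : ∀ r : ℝ≥0, ((r : ℝ) : EReal) * μ a ≤ ((r : ℝ) : EReal) * μ b + 1 := by
    intro r
    rw [← hsmul, ← hsmul]
    exact hv _ _ (N.rel_of_le v (PreorderedCone.smul_le_smul' r hab))
  rcases eq_or_lt_of_le (le_top : μ b ≤ ⊤) with hbt | hbt
  · rw [hbt]; exact le_top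
  lift μ b to ℝ using ⟨hbt.ne, hbot b⟩ with y hy
  rcases eq_or_lt_of_le (le_top : μ a ≤ ⊤) with hat | hat
  · exfalso
    have := key 1
    rw [hat] at this
    simp only [NNReal.coe_one, EReal.coe_one, one_mul] at this
    have h1 : ((y : EReal) + 1) = ((y + 1 : ℝ) : EReal) := by norm_cast
    rw [h1] at this
    exact EReal.coe_ne_top _ (top_le_iff.mp this)
  lift μ a to ℝ using ⟨hat.ne, hbot a⟩ with x hx
  rw [EReal.coe_le_coe_iff]
  refine le_of_forall_pos_le_add ?_
  intro ε hε
  have hr : (0 : ℝ) < ε⁻¹ := by positivity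
  have := key ⟨ε⁻¹, hr.le⟩
  have h2 : ((ε⁻¹ * x : ℝ) : EReal) ≤ ((ε⁻¹ * y + 1 : ℝ) : EReal) := by
    push_cast at this ⊢
    convert this using 2 <;> norm_cast
  rw [EReal.coe_le_coe_iff] at h2
  have := mul_le_mul_of_nonneg_left h2 hε.le
  rw [mul_add, ← mul_assoc, ← mul_assoc, mul_inv_cancel₀ hε.ne', one_mul, one_mul,
    mul_one] at this
  linarith

/-- if every symmetric neighborhood has a greatest element, then
`(P, V)` is barreled. -/
theorem stmt4 (N : NbhdSystem P)
    (hmax : ∀ (b : P) (v : N.V), ∃ c ∈ symN N v b, ∀ a ∈ symN N v b, a ≤ c) :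
    ∀ B : Set (P × P), IsBarrel N B → ∀ b : P,
      ∃ (v : N.V) (l : ℝ≥0), 0 < l ∧ ∀ a ∈ symN N v b, (a, b) ∈ scaleSet l B := by
  intro B hB b
  obtain ⟨hconv, hB1, hB2⟩ := hB
  obtain ⟨v, hv⟩ := hB1 b
  obtain ⟨c, hc, hcmax⟩ := hmax b v
  obtain ⟨l, hl, hlin⟩ := hv c hc
  refine ⟨v, l, hl, fun a ha => ?_⟩
  obtain ⟨⟨x, y⟩, hxy, hxyeq⟩ := hlin
  have hcx : x = l⁻¹ • c := by
    have : l • x = c := congrArg Prod.fst hxyeq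
    rw [← this, smul_smul, inv_mul_cancel₀ hl.ne', one_smul]
  have hby : y = l⁻¹ • b := by
    have : l • y = b := congrArg Prod.snd hxyeq
    rw [← this, smul_smul, inv_mul_cancel₀ hl.ne', one_smul]
  have hmem : (l⁻¹ • a, l⁻¹ • b) ∈ B := by
    by_contra hcon
    obtain ⟨μ, hμd, hμlt, hμB⟩ := hB2 _ _ hcon
    have h1 : μ (l⁻¹ • c) ≤ μ (l⁻¹ • b) + 1 := by
      have := hμB (x, y) hxy
      rwa [hcx, hby] at this
    have h2 : μ (l⁻¹ • a) ≤ μ (l⁻¹ • c) :=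
      hμd.monotone' N (PreorderedCone.smul_le_smul' l⁻¹ (hcmax a ha))
    exact absurd (h2.trans h1) (not_le.mpr hμlt)
  exact ⟨(l⁻¹ • a, l⁻¹ • b), hmem, by
    simp [smul_smul, mul_inv_cancel₀ hl.ne', one_smul]⟩
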